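/- For every irrational real number α, the inequality |α - p/q| < 1/(√5 · q²) has infinitely many rational solutions p/q. -/

import Mathlib

open Real

namespace HurwitzAux

/-- Complete quotients of the continued fraction expansion. -/
noncomputable def cq (α : ℝ) : ℕ → ℝ
  | 0 => α
  | n + 1 => (Int.fract (cq α n))⁻¹

/-- Numerators (shifted: `cfP α (n+1)` is the numerator of the `n`-th convergent). -/
noncomputable def cfP (α : ℝ) : ℕ → ℤ
  | 0 => 1
  | 1 => ⌊α⌋
  | n + 2 => ⌊cq α (n + 1)⌋ * cfP α (n + 1) + cfP α n

/-- Denominators. -/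
noncomputable def cfQ (α : ℝ) : ℕ → ℤ
  | 0 => 0
  | 1 => 1
  | n + 2 => ⌊cq α (n + 1)⌋ * cfQ α (n + 1) + cfQ α n

variable {α : ℝ} (hα : Irrational α)
include hα

lemma cq_irr : ∀ n, Irrational (cq α n)
  | 0 => hα
  | n + 1 => by
    have h2 : Irrational (Int.fract (cq α n)) := by
      have hf : Int.fract (cq α n) = cq α n - (⌊cq α n⌋ : ℝ) := rfl
      rw [hf]
      exact (cq_irr n).sub_intCast _
    exact h2.inv

lemma fract_irr (n : ℕ) : Irrational (Int.fract (cq α n)) := by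
  have h : Int.fract (cq α n) = cq α n - (⌊cq α n⌋ : ℝ) := rfl
  rw [h]
  exact (cq_irr hα n).sub_intCast _

lemma fract_pos (n : ℕ) : 0 < Int.fract (cq α n) := by
  have h := (fract_irr hα n).ne_rat 0
  rw [Rat.cast_zero] at h
  exact lt_of_le_of_ne (Int.fract_nonneg _) (Ne.symm h)

lemma one_lt_cq (n : ℕ) : 1 < cq α (n + 1) := by
  have h1 : Int.fract (cq α n) < 1 := Int.fract_lt_one _
  have h0 : 0 < Int.fract (cq α n) := fract_pos hα n
  rw [cq]
  exact one_lt_inv_iff₀.mpr ⟨h0, h1⟩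

lemma one_le_floor_cq (n : ℕ) : 1 ≤ ⌊cq α (n + 1)⌋ :=
  Int.le_floor.mpr (by exact_mod_cast (one_lt_cq hα n).le)

omit hα in
lemma cq_succ_eq (n : ℕ) : cq α (n + 1) = (Int.fract (cq α n))⁻¹ := rfl

/-- The key relation `cqₙ · cqₙ₊₁ = ⌊cqₙ⌋ · cqₙ₊₁ + 1`. -/
lemma cq_mul (n : ℕ) :
    cq α n * cq α (n + 1) = (⌊cq α n⌋ : ℝ) * cq α (n + 1) + 1 := by
  have h0 : Int.fract (cq α n) ≠ 0 := (fract_pos hα n).ne'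
  have h1 : Int.fract (cq α n) * cq α (n + 1) = 1 := by
    rw [cq_succ_eq, mul_inv_cancel₀ h0]
  have hf : Int.fract (cq α n) = cq α n - (⌊cq α n⌋ : ℝ) := rfl
  rw [hf] at h1
  linear_combination h1

lemma cfQ_nonneg : ∀ n, 0 ≤ cfQ α n
  | 0 => le_refl _
  | 1 => zero_le_one
  | n + 2 => by
    rw [cfQ]
    have h1 := one_le_floor_cq hα n
    have h2 := cfQ_nonneg (n + 1)
    have h3 := cfQ_nonneg n
    nlinarith

lemma cfQ_pos : ∀ n, 0 < cfQ α (n + 1)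
  | 0 => one_pos
  | n + 1 => by
    rw [cfQ]
    have h1 := one_le_floor_cq hα n
    have h2 := cfQ_pos n
    have h3 := cfQ_nonneg hα n
    nlinarith

lemma cfQ_mono (n : ℕ) : cfQ α (n + 1) ≤ cfQ α (n + 2) := by
  rw [cfQ]
  have h1 := one_le_floor_cq hα n
  have h2 := cfQ_pos hα n
  have h3 := cfQ_nonneg hα n
  nlinarith

lemma cfQ_ge : ∀ n : ℕ, (n : ℤ) ≤ cfQ α (n + 1)
  | 0 => by norm_num [cfQ]
  | n + 1 => by
    have h1 := cfQ_ge n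
    have h2 := one_le_floor_cq hα n
    have h3 := cfQ_pos hα n
    have h4 := cfQ_nonneg hα n
    rw [cfQ]
    rcases Nat.eq_zero_or_pos n with hn | hn
    · subst hn; simp [cfQ] at *; omega
    · have h5 : 1 ≤ cfQ α n := by
        have := cfQ_pos hα (n - 1)
        rw [Nat.sub_add_cancel hn] at this
        omega
      push_cast
      nlinarith

/-- Correctness: `α = (cqₙ₊₁ Pₙ₊₁ + Pₙ) / (cqₙ₊₁ Qₙ₊₁ + Qₙ)` in product form. -/
lemma cf_correct : ∀ n : ℕ,
    α * (cq α (n + 1) * cfQ α (n + 1) + cfQ α n) =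
      cq α (n + 1) * cfP α (n + 1) + cfP α n
  | 0 => by
    have h := cq_mul hα 0
    simp only [cfP, cfQ, cq] at *
    push_cast
    linear_combination h
  | n + 1 => by
    have ih := cf_correct n
    have h := cq_mul hα (n + 1)
    rw [show cfP α (n + 2) = ⌊cq α (n + 1)⌋ * cfP α (n + 1) + cfP α n from rfl,
      show cfQ α (n + 2) = ⌊cq α (n + 1)⌋ * cfQ α (n + 1) + cfQ α n from rfl]
    push_cast
    linear_combination cq α (n + 1 + 1) * ih - (α * (cfQ α (n + 1) : ℝ) - (cfP α (n + 1) : ℝ)) * h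

omit hα in
/-- Determinant identity. -/
lemma cf_det : ∀ n : ℕ,
    cfP α (n + 1) * cfQ α n - cfP α n * cfQ α (n + 1) = (-1) ^ (n + 1)
  | 0 => by simp [cfP, cfQ]
  | n + 1 => by
    have ih := cf_det n
    rw [show cfP α (n + 2) = ⌊cq α (n + 1)⌋ * cfP α (n + 1) + cfP α n from rfl,
      show cfQ α (n + 2) = ⌊cq α (n + 1)⌋ * cfQ α (n + 1) + cfQ α n from rfl]
    linear_combination -ih

/-- The error formula. -/
lemma cf_error (n : ℕ) :
    α - (cfP α (n + 1) : ℝ) / (cfQ α (n + 1) : ℝ) =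
      (-1) ^ n / ((cfQ α (n + 1) : ℝ) * (cq α (n + 1) * cfQ α (n + 1) + cfQ α n)) := by
  have hQ : (0 : ℝ) < (cfQ α (n + 1) : ℝ) := by exact_mod_cast cfQ_pos hα n
  have hD : (0 : ℝ) < cq α (n + 1) * cfQ α (n + 1) + cfQ α n := by
    have h1 := one_lt_cq hα n
    have h2 : (0 : ℝ) ≤ (cfQ α n : ℝ) := by exact_mod_cast cfQ_nonneg hα n
    nlinarith
  have hid := cf_correct hα n
  have hdet : (cfP α (n + 1) : ℝ) * cfQ α n - cfP α n * cfQ α (n + 1) = (-1) ^ (n + 1) := by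
    exact_mod_cast congrArg (Int.cast : ℤ → ℝ) (cf_det (α := α) n)
  rw [eq_div_iff (mul_pos hQ hD).ne']
  have hc : (cfP α (n + 1) : ℝ) / (cfQ α (n + 1) : ℝ) * (cfQ α (n + 1) : ℝ)
      = (cfP α (n + 1) : ℝ) := div_mul_cancel₀ _ hQ.ne'
  linear_combination (cfQ α (n + 1) : ℝ) * hid
    - (cq α (n + 1) * (cfQ α (n + 1) : ℝ) + (cfQ α n : ℝ)) * hc - hdet

omit hα in
lemma sqrt5_pos : (0 : ℝ) < Real.sqrt 5 := Real.sqrt_pos.mpr (by norm_num)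

omit hα in
lemma sqrt5_sq : Real.sqrt 5 ^ 2 = 5 := Real.sq_sqrt (by norm_num)

omit hα in
lemma sqrt5_irr : Irrational (Real.sqrt 5) := by
  have := Nat.Prime.irrational_sqrt (p := 5) (by norm_num)
  simpa using this

omit hα in
/-- rational `w` can't be a root of `w² - √5 w + 1`. -/
lemma rat_not_root {a b : ℤ} (hb : (b : ℝ) ≠ 0)
    (h : ((a : ℝ)/b) ^ 2 - Real.sqrt 5 * ((a : ℝ)/b) + 1 = 0) : False := by
  have ha : (a : ℝ) ≠ 0 := by
    intro h0
    rw [h0] at h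
    norm_num at h
  field_simp [hb] at h
  have hab : ((a : ℝ) * (b : ℝ)) ≠ 0 := mul_ne_zero ha hb
  refine sqrt5_irr ⟨((a : ℚ) ^ 2 + (b : ℚ) ^ 2)/((a : ℚ) * (b : ℚ)), ?_⟩
  push_cast
  rw [div_eq_iff hab]
  apply mul_left_cancel₀ hb
  linear_combination (b : ℝ) * h

omit hα in
/-- Key real-number lemma in the Hurwitz argument. -/
lemma key {u w : ℝ} (hu : 1 < u) (hw : 0 < w) (hw1 : w ≤ 1)
    (h1 : u + w ≤ Real.sqrt 5) (h2 : 1/u + 1/w ≤ Real.sqrt 5)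
    (hroot : w ^ 2 - Real.sqrt 5 * w + 1 ≠ 0) :
    (Real.sqrt 5 - 1)/2 < w := by
  have hu0 : (0:ℝ) < u := by linarith
  have h3 : u + w ≤ Real.sqrt 5 * (u * w) := by
    have := mul_le_mul_of_nonneg_right h2 (le_of_lt (mul_pos hu0 hw))
    calc u + w = (1/u + 1/w) * (u * w) := by field_simp; ring
    _ ≤ Real.sqrt 5 * (u * w) := this
  have h4 : 0 < Real.sqrt 5 * w - 1 := by
    by_contra h
    push_neg at h
    nlinarith
  have h5 : w ≤ (Real.sqrt 5 - w) * (Real.sqrt 5 * w - 1) := by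
    have hu2 : u ≤ Real.sqrt 5 - w := by linarith
    nlinarith
  have h6 : w ^ 2 - Real.sqrt 5 * w + 1 < 0 := by
    have h7 : w ^ 2 - Real.sqrt 5 * w + 1 ≤ 0 := by nlinarith [sqrt5_sq]
    exact lt_of_le_of_ne h7 hroot
  by_contra hcon
  push_neg at hcon
  have h25 : (2 : ℝ) < Real.sqrt 5 := by nlinarith [sqrt5_sq, sqrt5_pos]
  have hp : 0 ≤ ((Real.sqrt 5 - 1)/2 - w) * ((Real.sqrt 5 + 1)/2 - w) :=
    mul_nonneg (by linarith) (by linarith)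
  nlinarith [sqrt5_sq, hp]

/-- The Hurwitz condition at index `n`. -/
def H (α : ℝ) (n : ℕ) : Prop :=
  Real.sqrt 5 * (cfQ α (n + 1) : ℝ) < cq α (n + 1) * (cfQ α (n + 1) : ℝ) + (cfQ α n : ℝ)

lemma lam_root_ne (n : ℕ) :
    ((cfQ α (n+1) : ℝ)/(cfQ α (n+2) : ℝ)) ^ 2
      - Real.sqrt 5 * ((cfQ α (n+1) : ℝ)/(cfQ α (n+2) : ℝ)) + 1 ≠ 0 := by
  intro h
  have hb : ((cfQ α (n+2) : ℝ)) ≠ 0 := by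
    have h2 := cfQ_pos hα (n + 1)
    exact_mod_cast ne_of_gt (by exact_mod_cast h2 : (0:ℝ) < (cfQ α (n+2) : ℝ))
  exact rat_not_root hb h

/-- From two consecutive failures, the ratio `Qₙ₊₁/Qₙ₊₂` exceeds the golden cut. -/
lemma two_fail (n : ℕ) (h1 : ¬ H α n) (h2 : ¬ H α (n + 1)) :
    (Real.sqrt 5 - 1)/2 < (cfQ α (n+1) : ℝ) / (cfQ α (n+2) : ℝ) := by
  have hQ1 : (0:ℝ) < (cfQ α (n+1) : ℝ) := by exact_mod_cast cfQ_pos hα n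
  have hQ2 : (0:ℝ) < (cfQ α (n+2) : ℝ) := by exact_mod_cast cfQ_pos hα (n+1)
  have hQ0 : (0:ℝ) ≤ (cfQ α n : ℝ) := by exact_mod_cast cfQ_nonneg hα n
  set u : ℝ := cq α (n + 2) with hu_def
  set w : ℝ := (cfQ α (n+1) : ℝ) / (cfQ α (n+2) : ℝ) with hw_def
  have hu : 1 < u := one_lt_cq hα (n + 1)
  have hw : 0 < w := div_pos hQ1 hQ2
  have hw1 : w ≤ 1 := by
    rw [hw_def, div_le_one hQ2]
    exact_mod_cast cfQ_mono hα n
  have hQrec : (cfQ α (n+2) : ℝ) = (⌊cq α (n+1)⌋ : ℝ) * (cfQ α (n+1) : ℝ) + (cfQ α n : ℝ) := by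
    rw [show cfQ α (n + 2) = ⌊cq α (n + 1)⌋ * cfQ α (n + 1) + cfQ α n from rfl]
    push_cast; ring
  -- u + w ≤ √5 from ¬H(n+1)
  have hsum : u + w ≤ Real.sqrt 5 := by
    unfold H at h2
    push_neg at h2
    rw [← mul_le_mul_iff_of_pos_right hQ2]
    have hwq : w * (cfQ α (n+2) : ℝ) = (cfQ α (n+1) : ℝ) := by
      rw [hw_def]; field_simp
    calc (u + w) * (cfQ α (n+2) : ℝ)
        = u * (cfQ α (n+2) : ℝ) + w * (cfQ α (n+2) : ℝ) := by ring
      _ = cq α (n+2) * (cfQ α (n+2) : ℝ) + (cfQ α (n+1) : ℝ) := by rw [hwq, hu_def]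
      _ ≤ Real.sqrt 5 * (cfQ α (n+2) : ℝ) := h2
  -- 1/u + 1/w ≤ √5 from ¬H n
  have hinv : 1/u + 1/w ≤ Real.sqrt 5 := by
    unfold H at h1
    push_neg at h1
    have hiu : 1/u = cq α (n+1) - (⌊cq α (n+1)⌋ : ℝ) := by
      rw [hu_def, cq_succ_eq, one_div, inv_inv, Int.fract]
    have hiw : 1/w = (⌊cq α (n+1)⌋ : ℝ) + (cfQ α n : ℝ) / (cfQ α (n+1) : ℝ) := by
      rw [hw_def, one_div, inv_div, hQrec]
      field_simp
    rw [hiu, hiw]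
    have hgoal : cq α (n+1) + (cfQ α n : ℝ) / (cfQ α (n+1) : ℝ) ≤ Real.sqrt 5 := by
      rw [← mul_le_mul_iff_of_pos_right hQ1]
      have hq : (cfQ α n : ℝ) / (cfQ α (n+1) : ℝ) * (cfQ α (n+1) : ℝ) = (cfQ α n : ℝ) := by
        field_simp
      calc (cq α (n+1) + (cfQ α n : ℝ) / (cfQ α (n+1) : ℝ)) * (cfQ α (n+1) : ℝ)
          = cq α (n+1) * (cfQ α (n+1) : ℝ) + (cfQ α n : ℝ) / (cfQ α (n+1) : ℝ) * (cfQ α (n+1) : ℝ) := by ring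
        _ = cq α (n+1) * (cfQ α (n+1) : ℝ) + (cfQ α n : ℝ) := by rw [hq]
        _ ≤ Real.sqrt 5 * (cfQ α (n+1) : ℝ) := h1
    linarith [hgoal]
  exact key hu hw hw1 hsum hinv (lam_root_ne hα n)

/-- Among any three consecutive indices, the Hurwitz condition holds at least once. -/
lemma three (n : ℕ) : H α n ∨ H α (n + 1) ∨ H α (n + 2) := by
  by_contra hc
  push_neg at hc
  obtain ⟨h1, h2, h3⟩ := hc
  have w1 := two_fail hα n h1 h2
  have w2 := two_fail hα (n + 1) h2 h3
  have hQ1 : (0:ℝ) < (cfQ α (n+1) : ℝ) := by exact_mod_cast cfQ_pos hα n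
  have hQ2 : (0:ℝ) < (cfQ α (n+2) : ℝ) := by exact_mod_cast cfQ_pos hα (n+1)
  have hQ3 : (0:ℝ) < (cfQ α (n+3) : ℝ) := by exact_mod_cast cfQ_pos hα (n+2)
  set g : ℝ := (Real.sqrt 5 - 1)/2 with hg_def
  have hg : 0 < g := by
    have h25 : (2 : ℝ) < Real.sqrt 5 := by nlinarith [sqrt5_sq, sqrt5_pos]
    rw [hg_def]; linarith
  have e1 : g * (cfQ α (n+2) : ℝ) < (cfQ α (n+1) : ℝ) := (lt_div_iff₀ hQ2).mp w1
  have e2 : g * (cfQ α (n+3) : ℝ) < (cfQ α (n+2) : ℝ) := (lt_div_iff₀ hQ3).mp w2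
  have hrec : (cfQ α (n+3) : ℝ) = (⌊cq α (n+2)⌋ : ℝ) * (cfQ α (n+2) : ℝ) + (cfQ α (n+1) : ℝ) := by
    rw [show cfQ α (n + 3) = ⌊cq α (n + 2)⌋ * cfQ α (n + 2) + cfQ α (n + 1) from rfl]
    push_cast; ring
  have ha : (1:ℝ) ≤ (⌊cq α (n+2)⌋ : ℝ) := by exact_mod_cast one_le_floor_cq hα (n+1)
  have hsum : (cfQ α (n+2) : ℝ) + (cfQ α (n+1) : ℝ) ≤ (cfQ α (n+3) : ℝ) := by
    rw [hrec]; nlinarith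
  -- combine: (g² + g) Q₂ < Q₂ but g² + g = 1.
  have e3 : g * ((cfQ α (n+2) : ℝ) + (cfQ α (n+1) : ℝ)) < (cfQ α (n+2) : ℝ) := by
    calc g * ((cfQ α (n+2) : ℝ) + (cfQ α (n+1) : ℝ)) ≤ g * (cfQ α (n+3) : ℝ) := by nlinarith
      _ < (cfQ α (n+2) : ℝ) := e2
  have hgg : g ^ 2 + g = 1 := by rw [hg_def]; nlinarith [sqrt5_sq]
  nlinarith [mul_lt_mul_of_pos_left e1 hg]

/-- Indices satisfying `H` give good rational approximations. -/
lemma good (n : ℕ) (hH : H α n) :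
    0 < cfQ α (n + 1) ∧
      |α - (cfP α (n + 1) : ℝ) / (cfQ α (n + 1) : ℝ)| <
        1 / (Real.sqrt 5 * ((cfQ α (n + 1) : ℤ) : ℝ) ^ 2) := by
  have hQ : (0:ℝ) < (cfQ α (n + 1) : ℝ) := by exact_mod_cast cfQ_pos hα n
  have hD : (0 : ℝ) < cq α (n + 1) * cfQ α (n + 1) + cfQ α n := by
    have h1 := one_lt_cq hα n
    have h2 : (0 : ℝ) ≤ (cfQ α n : ℝ) := by exact_mod_cast cfQ_nonneg hα n
    nlinarith
  refine ⟨cfQ_pos hα n, ?_⟩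
  rw [cf_error hα n]
  rw [abs_div, abs_pow, abs_neg, abs_one, one_pow]
  rw [abs_of_pos (mul_pos hQ hD)]
  apply one_div_lt_one_div_of_lt (by positivity)
  unfold H at hH
  nlinarith [hH, hQ]

end HurwitzAux

open HurwitzAux in


/-- Hurwitz: for every irrational `α`, there are infinitely many pairs of integers
`(p, q)` with `q > 0` such that `|α - p/q| < 1/(√5 q²)`. -/
theorem stmt_1 (α : ℝ) (hα : Irrational α) :
    {pq : ℤ × ℤ | 0 < pq.2 ∧
      |α - (pq.1 : ℝ) / (pq.2 : ℝ)| < 1 / (Real.sqrt 5 * (pq.2 : ℝ) ^ 2)}.Infinite := by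
  set S : Set (ℤ × ℤ) := {pq : ℤ × ℤ | 0 < pq.2 ∧
      |α - (pq.1 : ℝ) / (pq.2 : ℝ)| < 1 / (Real.sqrt 5 * (pq.2 : ℝ) ^ 2)} with hS
  have hmem : ∀ k : ℕ, H α k → (cfP α (k + 1), cfQ α (k + 1)) ∈ S := by
    intro k hk
    obtain ⟨h1, h2⟩ := good hα k hk
    exact ⟨h1, h2⟩
  by_contra hfin
  rw [Set.not_infinite] at hfin
  obtain ⟨b, hb⟩ := hfin.bddAbove
  set N : ℕ := b.2.toNat + 1 with hN
  have hex : ∃ k : ℕ, N ≤ k ∧ H α k := by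
    rcases three hα N with h | h | h
    · exact ⟨N, le_refl _, h⟩
    · exact ⟨N + 1, by omega, h⟩
    · exact ⟨N + 2, by omega, h⟩
  obtain ⟨k, hkN, hk⟩ := hex
  have hle := hb (hmem k hk)
  have hle2 : cfQ α (k + 1) ≤ b.2 := hle.2
  have hge : (k : ℤ) ≤ cfQ α (k + 1) := cfQ_ge hα k
  have : (N : ℤ) ≤ b.2 := by
    calc (N : ℤ) ≤ (k : ℤ) := by exact_mod_cast hkN
    _ ≤ cfQ α (k + 1) := hge
    _ ≤ b.2 := hle2
  omega
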